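/- Let Y be a topological space and let (W_k)_{k ∈ ℕ} be a monotone increasing sequence of open subsets of Y with ⋃_k W_k = Y. Suppose that for every k and every natural number n, every continuous map from the n-sphere Sⁿ into the subspace W_k is null-homotopic (homotopic, within W_k, to a constant map). Then for every n, every continuous map from Sⁿ into Y is null-homotopic. -/

import Mathlib

/-- The exhaustion argument proving Corollary 4.13 of the paper: if `Y` is the increasing
union of open sets `W k` such that every map of a sphere into `W k` is null-homotopic in
`W k`, then every map of a sphere into `Y` is null-homotopic. -/
theorem stmt_6 {Y : Type*} [TopologicalSpace Y] (W : ℕ → Set Y)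
    (hmono : Monotone W) (hopen : ∀ k, IsOpen (W k)) (hunion : ⋃ k, W k = Set.univ)
    (h : ∀ (k n : ℕ)
      (f : C(Metric.sphere (0 : EuclideanSpace ℝ (Fin (n + 1))) 1, W k)),
        ∃ c, ContinuousMap.Homotopic f (ContinuousMap.const _ c)) :
    ∀ (n : ℕ) (f : C(Metric.sphere (0 : EuclideanSpace ℝ (Fin (n + 1))) 1, Y)),
      ∃ c, ContinuousMap.Homotopic f (ContinuousMap.const _ c) := by
  intro n f
  have hcpt : IsCompact (Set.range f) := (isCompact_range f.continuous)
  have hcov : Set.range f ⊆ ⋃ k, W k := by rw [hunion]; exact Set.subset_univ _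
  obtain ⟨k, hk⟩ := hcpt.elim_directed_cover W hopen hcov
    (hmono.directed_le)
  set g : C(Metric.sphere (0 : EuclideanSpace ℝ (Fin (n + 1))) 1, W k) :=
    ⟨fun x => ⟨f x, hk (Set.mem_range_self x)⟩,
      Continuous.subtype_mk f.continuous _⟩ with hg
  obtain ⟨c, hc⟩ := h k n g
  refine ⟨(c : Y), ?_⟩
  have := ContinuousMap.Homotopic.comp (ContinuousMap.Homotopic.refl
    (⟨Subtype.val, continuous_subtype_val⟩ : C(W k, Y))) hc
  exact this
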